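/- Let M be a Coxeter matrix with Coxeter group W, set of reflections T, Artin group A, standard epimorphism μ: A → W, and homomorphism U: A → Sym(ℤ × T) with U(σ_i) = U_i. Let g_1, g_2 ∈ A and (k, r) ∈ ℤ × T, and write (k_1, r_1) = U(g_1)(k, r) and (k_2, r_2) = U(g_2)(k, r). If μ(g_1) = μ(g_2), then r_1 = r_2 and k_1 ≡ k_2 (mod 2). -/

import Mathlib

open Function

/-- The alternating word `⟨i j⟩^m = i j i j ⋯` with `m` factors, in the free group. -/
def altWord {α : Type*} (i j : α) : ℕ → FreeGroup α
  | 0 => 1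
  | m + 1 => FreeGroup.of i * altWord j i m

/-- The braid relations of an Artin group of type `M` (an entry `0` encodes `∞`). -/
def artinRels {n : ℕ} (M : Matrix (Fin n) (Fin n) ℕ) : Set (FreeGroup (Fin n)) :=
  {r | ∃ i j : Fin n, i ≠ j ∧ M i j ≠ 0 ∧
      r = altWord i j (M i j) * (altWord j i (M i j))⁻¹}

/-- The relations of the Coxeter group of type `M`. -/
def coxRels {n : ℕ} (M : Matrix (Fin n) (Fin n) ℕ) : Set (FreeGroup (Fin n)) :=
  artinRels M ∪ {r | ∃ i : Fin n, r = FreeGroup.of i ^ 2}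

/-- The Artin group of type `M`. -/
abbrev ArtinGroup {n : ℕ} (M : Matrix (Fin n) (Fin n) ℕ) : Type :=
  PresentedGroup (artinRels M)

/-- The Coxeter group of type `M`, as the quotient of the Artin group by `σᵢ² = 1`. -/
abbrev CoxGroup {n : ℕ} (M : Matrix (Fin n) (Fin n) ℕ) : Type :=
  PresentedGroup (coxRels M)

/-- The standard generators `σᵢ` of the Artin group. -/
def σA {n : ℕ} (M : Matrix (Fin n) (Fin n) ℕ) (i : Fin n) : ArtinGroup M :=
  PresentedGroup.of i

/-- The standard generators `sᵢ` of the Coxeter group. -/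
def sC {n : ℕ} (M : Matrix (Fin n) (Fin n) ℕ) (i : Fin n) : CoxGroup M :=
  PresentedGroup.of i

lemma lift_of_eq_mk {n : ℕ} (M : Matrix (Fin n) (Fin n) ℕ) (r : FreeGroup (Fin n)) :
    FreeGroup.lift (fun i => (PresentedGroup.of i : CoxGroup M)) r
      = PresentedGroup.mk (coxRels M) r := by
  have h : (FreeGroup.lift (fun i => (PresentedGroup.of i : CoxGroup M)))
      = PresentedGroup.mk (coxRels M) :=
    FreeGroup.ext_hom _ _ (fun x => by simp [PresentedGroup.of])
  rw [h]

/-- The standard epimorphism `μ : A → W`. -/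
def stdEpi {n : ℕ} (M : Matrix (Fin n) (Fin n) ℕ) : ArtinGroup M →* CoxGroup M :=
  PresentedGroup.toGroup (f := fun i => (PresentedGroup.of i : CoxGroup M)) (by
    intro r hr
    rw [lift_of_eq_mk]
    exact (QuotientGroup.eq_one_iff r).mpr
      (Subgroup.subset_normalClosure (Set.mem_union_left _ hr)))

@[simp] lemma stdEpi_of {n : ℕ} (M : Matrix (Fin n) (Fin n) ℕ) (i : Fin n) :
    stdEpi M (σA M i) = sC M i :=
  PresentedGroup.toGroup.of _

/-- `φ : A → W` is ordinary if it is `α ∘ μ` for some automorphism `α` of `W`. -/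
def Ordinary {n : ℕ} {M : Matrix (Fin n) (Fin n) ℕ}
    (φ : ArtinGroup M →* CoxGroup M) : Prop :=
  ∃ α : CoxGroup M ≃* CoxGroup M, φ = α.toMonoidHom.comp (stdEpi M)

/-- The set of reflections of the Coxeter group of type `M`. -/
def Refl {n : ℕ} (M : Matrix (Fin n) (Fin n) ℕ) : Set (CoxGroup M) :=
  {t | ∃ (w : CoxGroup M) (i : Fin n), t = w * sC M i * w⁻¹}

lemma sC_sq {n : ℕ} (M : Matrix (Fin n) (Fin n) ℕ) (i : Fin n) :
    sC M i * sC M i = 1 := by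
  have h1 : (FreeGroup.of i ^ 2 : FreeGroup (Fin n))
      ∈ Subgroup.normalClosure (coxRels M) :=
    Subgroup.subset_normalClosure (Set.mem_union_right _ ⟨i, rfl⟩)
  have h2 : PresentedGroup.mk (coxRels M) (FreeGroup.of i ^ 2) = 1 :=
    (QuotientGroup.eq_one_iff _).mpr h1
  simpa [sq, map_mul, sC, PresentedGroup.of] using h2

lemma sC_inv {n : ℕ} (M : Matrix (Fin n) (Fin n) ℕ) (i : Fin n) :
    (sC M i)⁻¹ = sC M i :=
  inv_eq_of_mul_eq_one_right (sC_sq M i)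

lemma conj_mem_Refl {n : ℕ} (M : Matrix (Fin n) (Fin n) ℕ) (i : Fin n)
    {t : CoxGroup M} (ht : t ∈ Refl M) : sC M i * t * sC M i ∈ Refl M := by
  obtain ⟨w, j, rfl⟩ := ht
  refine ⟨sC M i * w, j, ?_⟩
  rw [mul_inv_rev, sC_inv]
  simp [mul_assoc]

lemma conj_eq_self_iff {n : ℕ} (M : Matrix (Fin n) (Fin n) ℕ) (i : Fin n)
    (t : CoxGroup M) : sC M i * t * sC M i = sC M i ↔ t = sC M i := by
  constructor
  · intro h
    have h2 : sC M i * (t * sC M i) = sC M i * 1 := by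
      rw [mul_one]; rw [← mul_assoc]; exact h
    have h3 : t * sC M i = 1 := mul_left_cancel h2
    calc t = t * sC M i * sC M i := by rw [mul_assoc, sC_sq, mul_one]
    _ = sC M i := by rw [h3, one_mul]
  · rintro rfl
    rw [sC_sq, one_mul]

open Classical in
/-- The underlying map of `Uᵢ` (with increment `e` on the distinguished reflection). -/
noncomputable def UFun {n : ℕ} (M : Matrix (Fin n) (Fin n) ℕ) (i : Fin n) (e : ℤ) :
    ℤ × Refl M → ℤ × Refl M := fun p =>
  if (p.2 : CoxGroup M) = sC M i then (p.1 + e, p.2)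
  else (p.1, ⟨sC M i * p.2 * sC M i, conj_mem_Refl M i p.2.2⟩)

lemma UFun_pos {n : ℕ} (M : Matrix (Fin n) (Fin n) ℕ) (i : Fin n) (e k : ℤ)
    (t : Refl M) (h : (t : CoxGroup M) = sC M i) : UFun M i e (k, t) = (k + e, t) := by
  simp only [UFun, h, if_pos]

lemma UFun_neg {n : ℕ} (M : Matrix (Fin n) (Fin n) ℕ) (i : Fin n) (e k : ℤ)
    (t : Refl M) (h : ¬ (t : CoxGroup M) = sC M i) :
    UFun M i e (k, t) = (k, ⟨sC M i * t * sC M i, conj_mem_Refl M i t.2⟩) := by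
  simp only [UFun, h, if_neg, if_false]

lemma UFun_inverse {n : ℕ} (M : Matrix (Fin n) (Fin n) ℕ) (i : Fin n) (e : ℤ) :
    Function.LeftInverse (UFun M i (-e)) (UFun M i e) := by
  rintro ⟨k, t⟩
  by_cases h : (t : CoxGroup M) = sC M i
  · rw [UFun_pos M i e k t h, UFun_pos M i (-e) (k + e) t h]
    simp
  · rw [UFun_neg M i e k t h]
    have h' : ¬ (sC M i * (t : CoxGroup M) * sC M i = sC M i) := fun hc =>
      h ((conj_eq_self_iff M i t).mp hc)
    rw [UFun_neg M i (-e) k _ h']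
    refine Prod.ext rfl (Subtype.ext ?_)
    show sC M i * (sC M i * (t : CoxGroup M) * sC M i) * sC M i = (t : CoxGroup M)
    calc sC M i * (sC M i * (t : CoxGroup M) * sC M i) * sC M i
        = (sC M i * sC M i) * ((t : CoxGroup M) * (sC M i * sC M i)) := by
          simp only [mul_assoc]
      _ = (t : CoxGroup M) := by rw [sC_sq]; simp

/-- The permutation `Uᵢ` of `ℤ × T`: `(k, t) ↦ (k, sᵢ t sᵢ)` if `t ≠ sᵢ`, and
`(k, sᵢ) ↦ (k + 1, sᵢ)`. -/
noncomputable def Uperm {n : ℕ} (M : Matrix (Fin n) (Fin n) ℕ) (i : Fin n) :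
    Equiv.Perm (ℤ × Refl M) where
  toFun := UFun M i 1
  invFun := UFun M i (-1)
  left_inv := UFun_inverse M i 1
  right_inv := by
    have h := UFun_inverse M i (-1)
    rw [neg_neg] at h
    exact h

open Classical in
/-- The mod-2 analogue of `UFun`. -/
noncomputable def VFun {n : ℕ} (M : Matrix (Fin n) (Fin n) ℕ) (i : Fin n) :
    ZMod 2 × Refl M → ZMod 2 × Refl M := fun p =>
  if (p.2 : CoxGroup M) = sC M i then (p.1 + 1, p.2)
  else (p.1, ⟨sC M i * p.2 * sC M i, conj_mem_Refl M i p.2.2⟩)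

lemma VFun_pos {n : ℕ} (M : Matrix (Fin n) (Fin n) ℕ) (i : Fin n) (c : ZMod 2)
    (t : Refl M) (h : (t : CoxGroup M) = sC M i) : VFun M i (c, t) = (c + 1, t) := by
  simp only [VFun, h, if_pos]

lemma VFun_neg {n : ℕ} (M : Matrix (Fin n) (Fin n) ℕ) (i : Fin n) (c : ZMod 2)
    (t : Refl M) (h : ¬ (t : CoxGroup M) = sC M i) :
    VFun M i (c, t) = (c, ⟨sC M i * t * sC M i, conj_mem_Refl M i t.2⟩) := by
  simp only [VFun, h, if_neg, if_false]

lemma VFun_involutive {n : ℕ} (M : Matrix (Fin n) (Fin n) ℕ) (i : Fin n) :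
    Function.Involutive (VFun M i) := by
  rintro ⟨c, t⟩
  by_cases h : (t : CoxGroup M) = sC M i
  · rw [VFun_pos M i c t h, VFun_pos M i (c + 1) t h]
    refine Prod.ext ?_ rfl
    show c + 1 + 1 = c
    have h2 : (1 + 1 : ZMod 2) = 0 := rfl
    rw [add_assoc, h2, add_zero]
  · have h' : ¬ (sC M i * (t : CoxGroup M) * sC M i = sC M i) := fun hc =>
      h ((conj_eq_self_iff M i t).mp hc)
    rw [VFun_neg M i c t h, VFun_neg M i c _ h']
    refine Prod.ext rfl (Subtype.ext ?_)
    show sC M i * (sC M i * (t : CoxGroup M) * sC M i) * sC M i = (t : CoxGroup M)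
    calc sC M i * (sC M i * (t : CoxGroup M) * sC M i) * sC M i
        = (sC M i * sC M i) * ((t : CoxGroup M) * (sC M i * sC M i)) := by
          simp only [mul_assoc]
      _ = (t : CoxGroup M) := by rw [sC_sq]; simp

/-- The mod-2 analogue of `Uperm`. -/
noncomputable def Vperm {n : ℕ} (M : Matrix (Fin n) (Fin n) ℕ) (i : Fin n) :
    Equiv.Perm (ZMod 2 × Refl M) :=
  (VFun_involutive M i).toPerm

/-- The projection `ℤ × T → (ℤ/2) × T`. -/
def projMod2 {n : ℕ} (M : Matrix (Fin n) (Fin n) ℕ) :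
    ℤ × Refl M → ZMod 2 × Refl M := fun p => ((p.1 : ZMod 2), p.2)

lemma projMod2_surjective {n : ℕ} (M : Matrix (Fin n) (Fin n) ℕ) :
    Function.Surjective (projMod2 M) := by
  rintro ⟨c, t⟩
  exact ⟨((ZMod.cast c : ℤ), t), by
    refine Prod.ext ?_ rfl
    exact ZMod.intCast_rightInverse c⟩

lemma proj_Uperm {n : ℕ} (M : Matrix (Fin n) (Fin n) ℕ) (i : Fin n)
    (p : ℤ × Refl M) : projMod2 M (Uperm M i p) = Vperm M i (projMod2 M p) := by
  obtain ⟨k, t⟩ := p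
  by_cases h : (t : CoxGroup M) = sC M i
  · show projMod2 M (UFun M i 1 (k, t)) = VFun M i (projMod2 M (k, t))
    rw [UFun_pos M i 1 k t h]
    show Prod.mk (((k + 1 : ℤ) : ZMod 2)) t = VFun M i (Prod.mk ((k : ℤ) : ZMod 2) t)
    rw [VFun_pos M i _ t h]
    refine Prod.ext ?_ rfl
    push_cast
    rfl
  · show projMod2 M (UFun M i 1 (k, t)) = VFun M i (projMod2 M (k, t))
    rw [UFun_neg M i 1 k t h]
    show Prod.mk ((k : ℤ) : ZMod 2) (⟨sC M i * t * sC M i, conj_mem_Refl M i t.2⟩ : Refl M)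
        = VFun M i (Prod.mk ((k : ℤ) : ZMod 2) t)
    rw [VFun_neg M i _ t h]

lemma proj_lift {n : ℕ} (M : Matrix (Fin n) (Fin n) ℕ) (w : FreeGroup (Fin n))
    (p : ℤ × Refl M) :
    projMod2 M (FreeGroup.lift (fun i => Uperm M i) w p)
      = FreeGroup.lift (fun i => Vperm M i) w (projMod2 M p) := by
  induction w using FreeGroup.induction_on generalizing p with
  | C1 => simp
  | of i =>
    rw [FreeGroup.lift_apply_of, FreeGroup.lift_apply_of]
    exact proj_Uperm M i p
  | inv_of i _ =>
    rw [map_inv, map_inv, FreeGroup.lift_apply_of, FreeGroup.lift_apply_of]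
    have key := proj_Uperm M i ((Uperm M i)⁻¹ p)
    rw [show (Uperm M i) ((Uperm M i)⁻¹ p) = p from Equiv.apply_symm_apply _ p] at key
    rw [key, show (Vperm M i)⁻¹ (Vperm M i (projMod2 M ((Uperm M i)⁻¹ p)))
      = projMod2 M ((Uperm M i)⁻¹ p) from Equiv.symm_apply_apply _ _]
  | mul x y hx hy =>
    simp only [map_mul, Equiv.Perm.mul_apply]
    rw [hx, hy]

lemma U_mk {n : ℕ} (M : Matrix (Fin n) (Fin n) ℕ)
    (U : ArtinGroup M →* Equiv.Perm (ℤ × Refl M))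
    (hU : ∀ i, U (σA M i) = Uperm M i) (w : FreeGroup (Fin n)) :
    U (PresentedGroup.mk (artinRels M) w) = FreeGroup.lift (fun i => Uperm M i) w := by
  have : U.comp (PresentedGroup.mk (artinRels M))
      = FreeGroup.lift (fun i => Uperm M i) :=
    FreeGroup.ext_hom _ _ (fun i => by
      simpa [σA, PresentedGroup.of] using hU i)
  exact DFunLike.congr_fun this w

lemma FV_rels {n : ℕ} (M : Matrix (Fin n) (Fin n) ℕ)
    (U : ArtinGroup M →* Equiv.Perm (ℤ × Refl M))
    (hU : ∀ i, U (σA M i) = Uperm M i) :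
    ∀ r ∈ coxRels M, FreeGroup.lift (fun i => Vperm M i) r = 1 := by
  intro r hr
  rcases hr with hr | ⟨i, rfl⟩
  · -- Artin relation: it holds in the Artin group, transfer via `U`.
    have hmk : PresentedGroup.mk (artinRels M) r = 1 :=
      (QuotientGroup.eq_one_iff r).mpr (Subgroup.subset_normalClosure hr)
    have hFU : FreeGroup.lift (fun i => Uperm M i) r = 1 := by
      rw [← U_mk M U hU, hmk, map_one]
    refine Equiv.ext fun q => ?_
    obtain ⟨p, rfl⟩ := projMod2_surjective M q
    rw [Equiv.Perm.one_apply, ← proj_lift, hFU, Equiv.Perm.one_apply]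
  · have hV := VFun_involutive M i
    refine Equiv.ext fun p => ?_
    rw [map_pow, FreeGroup.lift_apply_of, Equiv.Perm.one_apply, sq, Equiv.Perm.mul_apply]
    exact hV p

/-- Corollary 3.8: if `μ(g₁) = μ(g₂)` then the actions of `g₁` and `g₂` on `ℤ × T`
agree on the reflection component and agree mod 2 on the integer component. -/
theorem stmt_9 {n : ℕ} (M : Matrix (Fin n) (Fin n) ℕ)
    (hdiag : ∀ i, M i i = 1) (hsymm : ∀ i j, M i j = M j i)
    (hoff : ∀ i j, i ≠ j → M i j ≠ 1)
    (U : ArtinGroup M →* Equiv.Perm (ℤ × Refl M))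
    (hU : ∀ i, U (σA M i) = Uperm M i)
    (g₁ g₂ : ArtinGroup M) (k : ℤ) (r : Refl M)
    (h : stdEpi M g₁ = stdEpi M g₂) :
    (U g₁ (k, r)).2 = (U g₂ (k, r)).2 ∧
    (U g₁ (k, r)).1 % 2 = (U g₂ (k, r)).1 % 2 := by
  classical
  -- the induced homomorphism on the Coxeter group
  let Vc : CoxGroup M →* Equiv.Perm (ZMod 2 × Refl M) :=
    PresentedGroup.toGroup (f := fun i => Vperm M i) (FV_rels M U hU)
  have hVc : ∀ w : FreeGroup (Fin n),
      Vc (PresentedGroup.mk (coxRels M) w) = FreeGroup.lift (fun i => Vperm M i) w := by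
    intro w
    have : Vc.comp (PresentedGroup.mk (coxRels M))
        = FreeGroup.lift (fun i => Vperm M i) :=
      FreeGroup.ext_hom _ _ (fun i => by
        simpa [PresentedGroup.of] using
          PresentedGroup.toGroup.of (f := fun i => Vperm M i) (FV_rels M U hU) (x := i))
    exact DFunLike.congr_fun this w
  have hstd : ∀ w : FreeGroup (Fin n),
      stdEpi M (PresentedGroup.mk (artinRels M) w) = PresentedGroup.mk (coxRels M) w := by
    intro w
    have : (stdEpi M).comp (PresentedGroup.mk (artinRels M))
        = PresentedGroup.mk (coxRels M) := by
      refine FreeGroup.ext_hom _ _ (fun i => ?_)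
      have h1 : stdEpi M (σA M i) = sC M i := stdEpi_of M i
      simpa [σA, sC, PresentedGroup.of] using h1
    exact DFunLike.congr_fun this w
  -- main claim: projMod2 intertwines U with Vc ∘ stdEpi
  have main : ∀ g : ArtinGroup M, ∀ p : ℤ × Refl M,
      projMod2 M (U g p) = Vc (stdEpi M g) (projMod2 M p) := by
    intro g p
    obtain ⟨w, rfl⟩ := QuotientGroup.mk'_surjective (Subgroup.normalClosure (artinRels M)) g
    rw [show (QuotientGroup.mk' _ w) = PresentedGroup.mk (artinRels M) w from rfl,
      U_mk M U hU, hstd, hVc]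
    exact proj_lift M w p
  have h12 : projMod2 M (U g₁ (k, r)) = projMod2 M (U g₂ (k, r)) := by
    rw [main, main, h]
  have hsnd := congrArg Prod.snd h12
  have hfst := congrArg Prod.fst h12
  refine ⟨hsnd, ?_⟩
  have hmod : (U g₁ (k, r)).1 ≡ (U g₂ (k, r)).1 [ZMOD 2] :=
    (ZMod.intCast_eq_intCast_iff _ _ _).mp hfst
  have := hmod
  unfold Int.ModEq at this
  push_cast at this
  exact this
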